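/- Let p be an odd prime, let l be an odd integer, let k ≥ 1, and let i_1, …, i_k be integers each congruent to 0 or −1 modulo 2(p−1). Then the following two conditions are equivalent. Condition (A): i_j > p·i_{j+1} for every 1 ≤ j < k; and i_{t+1} > (p−1)(l + i_{t+2} + … + i_k) for every 0 ≤ t ≤ k−1. Condition (B): i_j > p·i_{j+1} for every 1 ≤ j < k; and (p−1)·l ≤ i_k. -/
import Mathlib


/-- Rephrasing of the admissibility conditions in the proof of Theorem 6.2 of
Brantner–Mathew (free spectral partition Lie algebras on one odd generator, odd prime `p`). -/
theorem stmt4 (p : ℕ) (hp : Nat.Prime p) (hpodd : Odd p) (l : ℤ) (hl : Odd l)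
    (k : ℕ) (hk : 1 ≤ k) (i : ℕ → ℤ)
    (hcong : ∀ j, 1 ≤ j → j ≤ k →
      Int.ModEq (2 * ((p : ℤ) - 1)) (i j) 0 ∨ Int.ModEq (2 * ((p : ℤ) - 1)) (i j) (-1)) :
    ((∀ j, 1 ≤ j → j < k → (p : ℤ) * i (j + 1) < i j) ∧
      (∀ t, t ≤ k - 1 →
        ((p : ℤ) - 1) * (l + ∑ j ∈ Finset.Icc (t + 2) k, i j) < i (t + 1)))
    ↔
    ((∀ j, 1 ≤ j → j < k → (p : ℤ) * i (j + 1) < i j) ∧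
      ((p : ℤ) - 1) * l ≤ i k) := by
  obtain ⟨q, hq⟩ := hpodd
  have hq1 : 1 ≤ q := by
    have := hp.two_le; omega
  have hqZ : (p : ℤ) = 2 * q + 1 := by exact_mod_cast congrArg (Nat.cast : ℕ → ℤ) hq
  obtain ⟨m, hm⟩ := hl
  constructor
  · rintro ⟨h1, h2⟩
    refine ⟨h1, ?_⟩
    have h := h2 (k - 1) le_rfl
    rw [show k - 1 + 1 = k from by omega,
      Finset.Icc_eq_empty (show ¬ (k - 1 + 2 ≤ k) by omega)] at h
    simpa using h.le
  · rintro ⟨h1, h2⟩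
    refine ⟨h1, ?_⟩
    -- strictness at the last index
    have hne : i k ≠ ((p : ℤ) - 1) * l := by
      intro he
      rcases hcong k hk le_rfl with h0 | h0
      · obtain ⟨c, hc⟩ := h0.dvd
        have hcancel : ((p : ℤ) - 1) * l = ((p : ℤ) - 1) * (-(2 * c)) := by
          linear_combination -he - hc
        have hpne : ((p : ℤ) - 1) ≠ 0 := by
          rw [hqZ]; omega
        have := mul_left_cancel₀ hpne hcancel
        omega
      · obtain ⟨c, hc⟩ := h0.dvd
        -- i k is even but -1 - i k is even, contradiction
        have heven : i k = 2 * (q * (2 * m + 1)) := by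
          rw [he, hm, hqZ]; ring
        have hodd : -1 - i k = 2 * (((p : ℤ) - 1) * c) := by
          rw [hc]; ring
        omega
    have hlast : ((p : ℤ) - 1) * l < i k := lt_of_le_of_ne h2 (fun h => hne h.symm)
    have key : ∀ d t, t + d + 1 = k →
        ((p : ℤ) - 1) * (l + ∑ j ∈ Finset.Icc (t + 2) k, i j) < i (t + 1) := by
      intro d
      induction d with
      | zero =>
        intro t ht
        rw [Finset.Icc_eq_empty (show ¬ (t + 2 ≤ k) by omega)]
        simpa [show t + 1 = k by omega] using hlast
      | succ d ih =>
        intro t ht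
        have IH := ih (t + 1) (by omega)
        have hA := h1 (t + 1) (by omega) (by omega)
        have hsplit : ∑ j ∈ Finset.Icc (t + 2) k, i j
            = i (t + 2) + ∑ j ∈ Finset.Icc (t + 3) k, i j := by
          rw [show Finset.Icc (t + 2) k = insert (t + 2) (Finset.Icc (t + 3) k) from by
              rw [← Finset.Ioc_insert_left (show t + 2 ≤ k by omega)]
              congr 1
              exact (Finset.Icc_add_one_left_eq_Ioc (t + 2) k).symm,
            Finset.sum_insert (by simp)]
        rw [hsplit]
        have hIH' : ((p : ℤ) - 1) * (l + ∑ j ∈ Finset.Icc (t + 3) k, i j) < i (t + 2) := by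
          simpa using IH
        nlinarith [hA, hIH']
    intro t ht
    exact key (k - 1 - t) t (by omega)
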